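/- The smooth map Φ: ℝ⁶ → ℝ⁶ given by y⁰ = x⁰ + x¹x⁴ + 3x⁵x²x⁴ − (x⁵)³(x⁴)², y¹ = x¹ + (x⁵)³x⁴, y² = x² − (x⁵)²x⁴, y³ = x³ + x⁵x⁴, y⁴ = x⁵, y⁵ = x⁴ is a diffeomorphism of ℝ⁶, and under this change of coordinates one has the identities dy⁰ − y⁵dy¹ − 3y⁴y⁵dy² − 3(y² + y⁵(y⁴)²)dy³ = dx⁰ + x¹dx⁴ − 3x²dx³, dy¹ + 3y⁴dy² + 3(y⁴)²dy³ = dx¹ + 3x⁵dx² + 3(x⁵)²dx³ + (x⁵)³dx⁴, dy² + 2y⁴dy³ = dx² + 2x⁵dx³ + (x⁵)²dx⁴, dy³ − y⁵dy⁴ = dx³ + x⁵dx⁴, dy⁵ = dx⁴, and −dy⁴ = −dx⁵. -/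
import Mathlib


/-- The coordinate change adapted to the `G₂` double fibration. -/
def PhiSix : (Fin 6 → ℝ) → Fin 6 → ℝ := fun x =>
  ![x 0 + x 1 * x 4 + 3 * x 5 * x 2 * x 4 - (x 5) ^ 3 * (x 4) ^ 2,
    x 1 + (x 5) ^ 3 * x 4,
    x 2 - (x 5) ^ 2 * x 4,
    x 3 + x 5 * x 4,
    x 5,
    x 4]

noncomputable def Dmap (x : Fin 6 → ℝ) : (Fin 6 → ℝ) →L[ℝ] (Fin 6 → ℝ) :=
  ContinuousLinearMap.pi
    ![ContinuousLinearMap.proj 0 + (x 4) • ContinuousLinearMap.proj 1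
        + (3 * x 5 * x 4) • ContinuousLinearMap.proj 2
        + (x 1 + 3 * x 5 * x 2 - 2 * (x 5)^3 * x 4) • ContinuousLinearMap.proj 4
        + (3 * x 2 * x 4 - 3 * (x 5)^2 * (x 4)^2) • ContinuousLinearMap.proj 5,
      ContinuousLinearMap.proj 1 + ((x 5)^3) • ContinuousLinearMap.proj 4
        + (3 * (x 5)^2 * x 4) • ContinuousLinearMap.proj 5,
      ContinuousLinearMap.proj 2 - ((x 5)^2) • ContinuousLinearMap.proj 4
        - (2 * x 5 * x 4) • ContinuousLinearMap.proj 5,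
      ContinuousLinearMap.proj 3 + (x 5) • ContinuousLinearMap.proj 4
        + (x 4) • ContinuousLinearMap.proj 5,
      ContinuousLinearMap.proj 5,
      ContinuousLinearMap.proj 4]

theorem hasD (x : Fin 6 → ℝ) : HasFDerivAt PhiSix (Dmap x) x := by
  apply hasFDerivAt_pi''
  intro i
  fin_cases i <;>
      simp only [PhiSix, Dmap, ContinuousLinearMap.proj_pi, Fin.zero_eta, Fin.mk_one,
        Fin.isValue, Matrix.cons_val_zero, Matrix.cons_val_one, Matrix.head_cons,
        Matrix.cons_val_succ, show ((⟨2, by omega⟩ : Fin 6)) = 2 from rfl,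
        show ((⟨3, by omega⟩ : Fin 6)) = 3 from rfl, show ((⟨4, by omega⟩ : Fin 6)) = 4 from rfl,
        show ((⟨5, by omega⟩ : Fin 6)) = 5 from rfl, Matrix.cons_val_two, Matrix.cons_val_three,
        Matrix.cons_val_four, Matrix.vecHead, Matrix.vecTail, Function.comp]
  · have e : (fun x : Fin 6 → ℝ =>
        x 0 + x 1 * x 4 + 3 * x 5 * x 2 * x 4 - x 5 ^ 3 * x 4 ^ 2) =
        (fun x : Fin 6 → ℝ =>
        x 0 + x 1 * x 4 + 3 * x 5 * x 2 * x 4 - x 5 * x 5 * x 5 * (x 4 * x 4)) := by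
      funext y; ring
    rw [e]
    exact ((((hasFDerivAt_apply 0 x).add ((hasFDerivAt_apply 1 x).mul (hasFDerivAt_apply 4 x))).add
        ((((hasFDerivAt_apply 5 x).const_mul 3).mul (hasFDerivAt_apply 2 x)).mul (hasFDerivAt_apply 4 x))).sub
        ((((hasFDerivAt_apply 5 x).mul (hasFDerivAt_apply 5 x)).mul (hasFDerivAt_apply 5 x)).mul
          ((hasFDerivAt_apply 4 x).mul (hasFDerivAt_apply 4 x)))).congr_fderiv
      (by ext v; simp [ContinuousLinearMap.proj]; ring)
  · have e : (fun x : Fin 6 → ℝ => x 1 + x 5 ^ 3 * x 4) =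
        (fun x : Fin 6 → ℝ => x 1 + x 5 * x 5 * x 5 * x 4) := by funext y; ring
    rw [e]
    exact ((hasFDerivAt_apply 1 x).add
        ((((hasFDerivAt_apply 5 x).mul (hasFDerivAt_apply 5 x)).mul (hasFDerivAt_apply 5 x)).mul
          (hasFDerivAt_apply 4 x))).congr_fderiv
      (by ext v; simp [ContinuousLinearMap.proj]; ring)
  · have e : (fun x : Fin 6 → ℝ => x 2 - x 5 ^ 2 * x 4) =
        (fun x : Fin 6 → ℝ => x 2 - x 5 * x 5 * x 4) := by funext y; ring
    rw [e]
    exact ((hasFDerivAt_apply 2 x).sub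
        (((hasFDerivAt_apply 5 x).mul (hasFDerivAt_apply 5 x)).mul
          (hasFDerivAt_apply 4 x))).congr_fderiv
      (by ext v; simp [ContinuousLinearMap.proj]; ring)
  · exact ((hasFDerivAt_apply 3 x).add
        ((hasFDerivAt_apply 5 x).mul (hasFDerivAt_apply 4 x))).congr_fderiv
      (by ext v; simp [ContinuousLinearMap.proj]; ring)
  · exact hasFDerivAt_apply 5 x
  · exact hasFDerivAt_apply 4 x

@[simp] lemma vec6_at0 {α : Type*} (a b c d e f : α) : ![a,b,c,d,e,f] 0 = a := rfl
@[simp] lemma vec6_at1 {α : Type*} (a b c d e f : α) : ![a,b,c,d,e,f] 1 = b := rfl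
@[simp] lemma vec6_at2 {α : Type*} (a b c d e f : α) : ![a,b,c,d,e,f] 2 = c := rfl
@[simp] lemma vec6_at3 {α : Type*} (a b c d e f : α) : ![a,b,c,d,e,f] 3 = d := rfl
@[simp] lemma vec6_at4 {α : Type*} (a b c d e f : α) : ![a,b,c,d,e,f] 4 = e := rfl
@[simp] lemma vec6_at5 {α : Type*} (a b c d e f : α) : ![a,b,c,d,e,f] 5 = f := rfl

noncomputable def PsiSix : (Fin 6 → ℝ) → Fin 6 → ℝ := fun y =>
  ![y 0 - y 1 * y 5 - 3 * y 4 * y 2 * y 5 - (y 4) ^ 3 * (y 5) ^ 2,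
    y 1 - (y 4) ^ 3 * y 5,
    y 2 + (y 4) ^ 2 * y 5,
    y 3 - y 4 * y 5,
    y 5,
    y 4]

/-- `PhiSix` is a diffeomorphism of `ℝ⁶` and the stated identities of 1-forms hold,
i.e. the pullbacks of the six `y`-coframe forms along `PhiSix` equal the corresponding
`x`-coframe forms. -/
theorem coordinate_change_double_fibration :
    (ContDiff ℝ (⊤ : ℕ∞) PhiSix ∧
      ∃ Ψ : (Fin 6 → ℝ) → Fin 6 → ℝ, ContDiff ℝ (⊤ : ℕ∞) Ψ ∧
        Function.LeftInverse Ψ PhiSix ∧ Function.RightInverse Ψ PhiSix) ∧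
    ∀ x v : Fin 6 → ℝ,
      let y := PhiSix x
      let dy := fderiv ℝ PhiSix x v
      (dy 0 - y 5 * dy 1 - 3 * y 4 * y 5 * dy 2 - 3 * (y 2 + y 5 * (y 4) ^ 2) * dy 3 =
          v 0 + x 1 * v 4 - 3 * x 2 * v 3) ∧
      (dy 1 + 3 * y 4 * dy 2 + 3 * (y 4) ^ 2 * dy 3 =
          v 1 + 3 * x 5 * v 2 + 3 * (x 5) ^ 2 * v 3 + (x 5) ^ 3 * v 4) ∧
      (dy 2 + 2 * y 4 * dy 3 = v 2 + 2 * x 5 * v 3 + (x 5) ^ 2 * v 4) ∧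
      (dy 3 - y 5 * dy 4 = v 3 + x 5 * v 4) ∧
      (dy 5 = v 4) ∧
      (-dy 4 = -v 5) := by
  constructor
  · refine ⟨?_, PsiSix, ?_, ?_, ?_⟩
    · apply contDiff_pi.2
      intro i
      fin_cases i <;> simp only [PhiSix, Fin.zero_eta, Fin.mk_one, Fin.isValue,
        show ((⟨2, by omega⟩ : Fin 6)) = 2 from rfl, show ((⟨3, by omega⟩ : Fin 6)) = 3 from rfl,
        show ((⟨4, by omega⟩ : Fin 6)) = 4 from rfl, show ((⟨5, by omega⟩ : Fin 6)) = 5 from rfl,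
        vec6_at0, vec6_at1, vec6_at2, vec6_at3, vec6_at4, vec6_at5] <;> fun_prop
    · apply contDiff_pi.2
      intro i
      fin_cases i <;> simp only [PsiSix, Fin.zero_eta, Fin.mk_one, Fin.isValue,
        show ((⟨2, by omega⟩ : Fin 6)) = 2 from rfl, show ((⟨3, by omega⟩ : Fin 6)) = 3 from rfl,
        show ((⟨4, by omega⟩ : Fin 6)) = 4 from rfl, show ((⟨5, by omega⟩ : Fin 6)) = 5 from rfl,
        vec6_at0, vec6_at1, vec6_at2, vec6_at3, vec6_at4, vec6_at5] <;> fun_prop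
    · intro x
      funext i
      fin_cases i <;>
        simp only [PhiSix, PsiSix, Fin.zero_eta, Fin.mk_one, Fin.isValue,
          show ((⟨2, by omega⟩ : Fin 6)) = 2 from rfl, show ((⟨3, by omega⟩ : Fin 6)) = 3 from rfl,
          show ((⟨4, by omega⟩ : Fin 6)) = 4 from rfl, show ((⟨5, by omega⟩ : Fin 6)) = 5 from rfl,
          vec6_at0, vec6_at1, vec6_at2, vec6_at3, vec6_at4, vec6_at5] <;> ring
    · intro y
      funext i
      fin_cases i <;>
        simp only [PhiSix, PsiSix, Fin.zero_eta, Fin.mk_one, Fin.isValue,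
          show ((⟨2, by omega⟩ : Fin 6)) = 2 from rfl, show ((⟨3, by omega⟩ : Fin 6)) = 3 from rfl,
          show ((⟨4, by omega⟩ : Fin 6)) = 4 from rfl, show ((⟨5, by omega⟩ : Fin 6)) = 5 from rfl,
          vec6_at0, vec6_at1, vec6_at2, vec6_at3, vec6_at4, vec6_at5] <;> ring
  · intro x v y dy
    have hd : ∀ i, dy i = Dmap x v i := fun i => by
      show fderiv ℝ PhiSix x v i = _
      rw [(hasD x).fderiv]
    have hy : ∀ i, y i = PhiSix x i := fun i => rfl
    refine ⟨?_, ?_, ?_, ?_, ?_, ?_⟩ <;>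
      simp only [hd, hy, Dmap, PhiSix, ContinuousLinearMap.pi_apply,
        vec6_at0, vec6_at1, vec6_at2, vec6_at3, vec6_at4, vec6_at5,
        ContinuousLinearMap.add_apply, ContinuousLinearMap.sub_apply,
        ContinuousLinearMap.smul_apply, ContinuousLinearMap.proj_apply, smul_eq_mul] <;>
      ring
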